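/- Suppose R0 > C/(C - V_L) and let x1 := 1 - C/(R0·(C - V_L)). Then G is differentiable at (x1, 0) and its Jacobian matrix there is the upper-triangular matrix with diagonal entries A := -C·(1 - 1/R0) + V_L and B := (C·(2 + θ - R0) + R0·V_L)/(R0·(C - V_L)), upper-right entry x1·(x1 - 1)·(V_H - V_L), and lower-left entry 0. Moreover A < 0, and both diagonal entries (hence both eigenvalues) are negative if and only if R0 > (2 + θ)·C/(C - V_L). -/

import Mathlib

theorem stmt_4 (C V_H V_L θ R0 : ℝ)
    (hCH : C > V_H) (hHL : V_H > V_L) (hL : V_L > 0) (hθ : θ > 0) (hR0 : R0 > 1)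
    (V : ℝ → ℝ) (hV : ∀ n, V n = n * V_H + (1 - n) * V_L)
    (f : ℝ → ℝ)
    (hf1 : ∀ x : ℝ, x < 1 - 1 / R0 → f x = 1 - 1 / (R0 * (1 - x)))
    (hf2 : ∀ x : ℝ, x ≥ 1 - 1 / R0 → f x = 0)
    (G : ℝ × ℝ → ℝ × ℝ)
    (hG : ∀ p : ℝ × ℝ, G p = (p.1 * (1 - p.1) * (f p.1 * C - V p.2),
        p.2 * (1 - p.2) * (-p.1 + (1 + θ) * (1 - p.1))))
    (hR : R0 > C / (C - V_L))
    (x1 A B : ℝ) (hx1 : x1 = 1 - C / (R0 * (C - V_L)))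
    (hA : A = -C * (1 - 1 / R0) + V_L)
    (hB : B = (C * (2 + θ - R0) + R0 * V_L) / (R0 * (C - V_L))) :
    DifferentiableAt ℝ G (x1, 0) ∧
    fderiv ℝ G (x1, 0) (1, 0) = (A, 0) ∧
    fderiv ℝ G (x1, 0) (0, 1) = (x1 * (x1 - 1) * (V_H - V_L), B) ∧
    A < 0 ∧
    (A < 0 ∧ B < 0 ↔ R0 > (2 + θ) * C / (C - V_L)) := by
  have hCL : C - V_L > 0 := by linarith
  have hR0' : (0:ℝ) < R0 := by linarith
  have hRC : C < R0 * (C - V_L) := by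
    have := (div_lt_iff₀ hCL).mp hR
    linarith
  -- x1 < 1 - 1/R0
  have hx1lt : x1 < 1 - 1 / R0 := by
    rw [hx1]
    have h1 : 1 / R0 < C / (R0 * (C - V_L)) := by
      rw [div_lt_div_iff₀ hR0' (by positivity)]
      nlinarith
    linarith
  -- the polynomial model g
  set g : ℝ × ℝ → ℝ × ℝ := fun p =>
    (p.1 * (1 - p.1) * (C - (p.2 * V_H + (1 - p.2) * V_L)) - p.1 * (C / R0),
     p.2 * (1 - p.2) * ((1 + θ) - (2 + θ) * p.1)) with hgdef
  -- G = g near (x1,0)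
  have hU : IsOpen {p : ℝ × ℝ | p.1 < 1 - 1 / R0} :=
    isOpen_lt continuous_fst continuous_const
  have hmem : (x1, (0:ℝ)) ∈ {p : ℝ × ℝ | p.1 < 1 - 1 / R0} := hx1lt
  have heq : G =ᶠ[nhds (x1, (0:ℝ))] g := by
    filter_upwards [hU.mem_nhds hmem] with p hp
    have hp' : p.1 < 1 - 1 / R0 := hp
    have h1x : (0:ℝ) < 1 - p.1 := by
      have : 1 / R0 > 0 := by positivity
      linarith
    rw [hG, hf1 _ hp', hV]
    have hne : (1 - p.1) ≠ 0 := ne_of_gt h1x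
    simp only [hgdef, Prod.mk.injEq]
    refine ⟨?_, by ring⟩
    field_simp
    ring
  -- differentiability of g
  have hgdiff : DifferentiableAt ℝ g (x1, 0) := by
    rw [hgdef]
    fun_prop
  have hGdiff : DifferentiableAt ℝ G (x1, 0) := (heq.differentiableAt_iff).mpr hgdiff
  have hfd : fderiv ℝ G (x1, 0) = fderiv ℝ g (x1, 0) := heq.fderiv_eq
  have hgF : HasFDerivAt g (fderiv ℝ g (x1, 0)) (x1, 0) := hgdiff.hasFDerivAt
  -- derivative data in direction (1,0)
  have hid : HasDerivAt (fun t : ℝ => x1 + t) 1 0 := by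
    simpa using (hasDerivAt_id (0:ℝ)).const_add x1
  have hline1 : HasDerivAt (fun t : ℝ => ((x1 + t, (0:ℝ)) : ℝ × ℝ)) ((1:ℝ), (0:ℝ)) 0 :=
    hid.prodMk (hasDerivAt_const 0 0)
  have hc1 : HasDerivAt (fun t : ℝ => g (x1 + t, 0)) (fderiv ℝ g (x1, 0) (1, 0)) 0 := by
    have hgF' : HasFDerivAt g (fderiv ℝ g (x1, 0)) ((x1 + 0, (0:ℝ)) : ℝ × ℝ) := by
      rw [add_zero]; exact hgF
    have := HasFDerivAt.comp_hasDerivAt (f := fun t : ℝ => ((x1 + t, (0:ℝ)) : ℝ × ℝ)) 0 hgF' hline1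
    exact this
  have hd1a : HasDerivAt
      (fun t : ℝ => (x1 + t) * (1 - (x1 + t)) * (C - ((0:ℝ) * V_H + (1 - 0) * V_L)) - (x1 + t) * (C / R0))
      ((1 * (1 - (x1 + 0)) + (x1 + 0) * (-1)) * (C - ((0:ℝ) * V_H + (1 - 0) * V_L)) - 1 * (C / R0)) 0 := by
    exact ((hid.mul (hid.const_sub 1)).mul_const _).sub (hid.mul_const _)
  have hd1b : HasDerivAt
      (fun t : ℝ => (0:ℝ) * (1 - 0) * ((1 + θ) - (2 + θ) * (x1 + t)))
      ((0:ℝ) * (1 - 0) * (-((2 + θ) * 1))) 0 := by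
    exact ((hasDerivAt_const 0 ((0:ℝ) * (1 - 0))).mul (((hid.const_mul (2 + θ)).const_sub (1 + θ)))).congr_deriv
      (by ring)
  have hd1 : HasDerivAt (fun t : ℝ => g (x1 + t, 0)) (A, 0) 0 := by
    have h := hd1a.prodMk hd1b
    have harr : ((1 * (1 - (x1 + 0)) + (x1 + 0) * (-1)) * (C - ((0:ℝ) * V_H + (1 - 0) * V_L)) - 1 * (C / R0),
        (0:ℝ) * (1 - 0) * (-((2 + θ) * 1))) = ((A, 0) : ℝ × ℝ) := by
      have : (1 * (1 - (x1 + 0)) + (x1 + 0) * (-1)) * (C - ((0:ℝ) * V_H + (1 - 0) * V_L)) - 1 * (C / R0) = A := by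
        rw [hA, hx1]
        field_simp
        ring
      rw [Prod.mk.injEq]
      exact ⟨this, by ring⟩
    rw [← harr]
    exact h
  have hval1 : fderiv ℝ G (x1, 0) (1, 0) = (A, 0) := by
    rw [hfd]; exact hc1.unique hd1
  -- derivative data in direction (0,1)
  have hidt : HasDerivAt (fun t : ℝ => t) 1 0 := hasDerivAt_id 0
  have hline2 : HasDerivAt (fun t : ℝ => ((x1, t) : ℝ × ℝ)) ((0:ℝ), (1:ℝ)) 0 :=
    (hasDerivAt_const 0 x1).prodMk hidt
  have hc2 : HasDerivAt (fun t : ℝ => g (x1, t)) (fderiv ℝ g (x1, 0) (0, 1)) 0 := by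
    have := hgF.comp_hasDerivAt (l := g) 0 hline2
    exact this
  have hd2a : HasDerivAt
      (fun t : ℝ => x1 * (1 - x1) * (C - (t * V_H + (1 - t) * V_L)) - x1 * (C / R0))
      (-(1 * V_H + -1 * V_L) * (x1 * (1 - x1))) 0 := by
    have h1 : HasDerivAt (fun t : ℝ => t * V_H + (1 - t) * V_L) (1 * V_H + -1 * V_L) 0 :=
      (hidt.mul_const V_H).add (((hidt.const_sub 1)).mul_const V_L)
    have h2 : HasDerivAt (fun t : ℝ => C - (t * V_H + (1 - t) * V_L)) (-(1 * V_H + -1 * V_L)) 0 :=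
      h1.const_sub C
    have h3 := (h2.const_mul (x1 * (1 - x1))).sub_const (x1 * (C / R0))
    simpa [mul_comm] using h3.congr_deriv (by ring)
  have hd2b : HasDerivAt
      (fun t : ℝ => t * (1 - t) * ((1 + θ) - (2 + θ) * x1))
      ((1 * (1 - 0) + 0 * (-1)) * ((1 + θ) - (2 + θ) * x1)) 0 := by
    exact (hidt.mul (hidt.const_sub 1)).mul_const _
  have hd2 : HasDerivAt (fun t : ℝ => g (x1, t)) (x1 * (x1 - 1) * (V_H - V_L), B) 0 := by
    have h := hd2a.prodMk hd2b
    have harr : ((-(1 * V_H + -1 * V_L) * (x1 * (1 - x1)),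
        (1 * (1 - 0) + 0 * (-1)) * ((1 + θ) - (2 + θ) * x1)) : ℝ × ℝ)
        = (x1 * (x1 - 1) * (V_H - V_L), B) := by
      rw [Prod.mk.injEq]
      constructor
      · ring
      · rw [hB, hx1]
        field_simp
        ring
    rw [← harr]
    exact h
  have hval2 : fderiv ℝ G (x1, 0) (0, 1) = (x1 * (x1 - 1) * (V_H - V_L), B) := by
    rw [hfd]; exact hc2.unique hd2
  -- sign facts
  have hA0 : A < 0 := by
    rw [hA]
    have h1 : C / R0 < C - V_L := by
      rw [div_lt_iff₀ hR0']
      nlinarith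
    have h2 : C * (1 - 1 / R0) = C - C / R0 := by ring
    linarith
  refine ⟨hGdiff, hval1, hval2, hA0, ?_⟩
  constructor
  · rintro ⟨-, hB0⟩
    rw [hB] at hB0
    have hden : (0:ℝ) < R0 * (C - V_L) := by positivity
    have hnum : C * (2 + θ - R0) + R0 * V_L < 0 := by
      by_contra h
      push_neg at h
      have := div_nonneg h (le_of_lt hden)
      linarith
    rw [gt_iff_lt, div_lt_iff₀ hCL]
    nlinarith
  · intro h
    rw [gt_iff_lt, div_lt_iff₀ hCL] at h
    refine ⟨hA0, ?_⟩
    rw [hB]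
    apply div_neg_of_neg_of_pos
    · nlinarith
    · positivity
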